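/- As formal power series (or for |q| < 1 and ζ ≠ 0), (−ζ; q)_∞ (−q/ζ; q)_∞ (q; q)_∞ = Σ_{n∈ℤ} q^{n(n−1)/2} ζ^n (the Jacobi triple product identity). -/

import Mathlib

open Finset Filter Complex Topology

namespace JTP

noncomputable def Q (q : ℂ) (m : ℕ) : ℂ := ∏ j ∈ Finset.range m, (1 - q ^ (j + 1))

noncomputable def gb (q : ℂ) (m k : ℕ) : ℂ :=
  if k ≤ m then Q q m / (Q q k * Q q (m - k)) else 0

variable {q : ℂ}

lemma one_sub_ne (hq1 : ‖q‖ < 1) (j : ℕ) : 1 - q ^ (j + 1) ≠ 0 := by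
  intro h
  have h1 : q ^ (j + 1) = 1 := by linear_combination -h
  have h2 : ‖q ^ (j + 1)‖ < 1 := by
    rw [norm_pow]
    exact pow_lt_one₀ (norm_nonneg q) hq1 (by omega)
  rw [h1, norm_one] at h2
  exact lt_irrefl _ h2

lemma Q_ne (hq1 : ‖q‖ < 1) (m : ℕ) : Q q m ≠ 0 := by
  rw [Q, Finset.prod_ne_zero_iff]
  exact fun j _ => one_sub_ne hq1 j

lemma Q_succ (m : ℕ) : Q q (m + 1) = Q q m * (1 - q ^ (m + 1)) := Finset.prod_range_succ _ m

lemma gb_zero (hq1 : ‖q‖ < 1) (m : ℕ) : gb q m 0 = 1 := by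
  rw [gb, if_pos (Nat.zero_le m)]
  have h0 : Q q 0 = 1 := by simp [Q]
  rw [h0, one_mul, Nat.sub_zero, div_self (Q_ne hq1 m)]

lemma gb_self (hq1 : ‖q‖ < 1) (m : ℕ) : gb q m m = 1 := by
  rw [gb, if_pos le_rfl, Nat.sub_self]
  have h0 : Q q 0 = 1 := by simp [Q]
  rw [h0, mul_one, div_self (Q_ne hq1 m)]

lemma pascal (hq1 : ‖q‖ < 1) (a d : ℕ) :
    gb q (a + 1 + d + 1) (a + 1) = gb q (a + 1 + d) (a + 1) + q ^ (d + 1) * gb q (a + 1 + d) a := by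
  have h1 : a + 1 ≤ a + 1 + d + 1 := by omega
  have h2 : a + 1 ≤ a + 1 + d := by omega
  have h3 : a ≤ a + 1 + d := by omega
  rw [gb, gb, gb, if_pos h1, if_pos h2, if_pos h3]
  have e1 : a + 1 + d + 1 - (a + 1) = d + 1 := by omega
  have e2 : a + 1 + d - (a + 1) = d := by omega
  have e3 : a + 1 + d - a = d + 1 := by omega
  rw [e1, e2, e3]
  have hQ : Q q (a + 1 + d + 1) = Q q (a + 1 + d) * (1 - q ^ (a + 1 + d + 1)) := Q_succ _
  have hQa : Q q (a + 1) = Q q a * (1 - q ^ (a + 1)) := Q_succ _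
  have hQd : Q q (d + 1) = Q q d * (1 - q ^ (d + 1)) := Q_succ _
  rw [hQ, hQa, hQd]
  have n1 := Q_ne hq1 (a + 1 + d)
  have n2 := Q_ne hq1 a
  have n3 := Q_ne hq1 d
  have n4 := one_sub_ne hq1 a
  have n5 := one_sub_ne hq1 d
  field_simp
  ring

lemma gb_of_gt (m k : ℕ) (h : m < k) : gb q m k = 0 := by
  rw [gb, if_neg (by omega)]

lemma pascal' (hq1 : ‖q‖ < 1) (k m : ℕ) (h : k ≤ m) :
    gb q (m + 1) (k + 1) = gb q m (k + 1) + q ^ (m - k) * gb q m k := by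
  rcases Nat.lt_or_ge k m with hlt | hge
  · have := pascal hq1 (q := q) k (m - k - 1)
    have e1 : k + 1 + (m - k - 1) + 1 = m + 1 := by omega
    have e2 : k + 1 + (m - k - 1) = m := by omega
    have e3 : m - k - 1 + 1 = m - k := by omega
    rw [e1, e2, e3] at this
    exact this
  · have hkm : k = m := le_antisymm h hge
    subst hkm
    rw [gb_self hq1, gb_of_gt _ _ (by omega), Nat.sub_self, pow_zero, one_mul,
      gb_self hq1, zero_add]

lemma tri (k : ℕ) : (k + 1) * k / 2 = k * (k - 1) / 2 + k := by
  have h2 : (k + 1) * k = k * (k - 1) + 2 * k := by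
    cases k with
    | zero => rfl
    | succ n => simp [Nat.add_sub_cancel]; ring
  have h3 : Even (k * (k - 1)) := by
    cases k with
    | zero => simp
    | succ n => simpa [Nat.add_sub_cancel, mul_comm] using Nat.even_mul_succ_self n
  obtain ⟨c, hc⟩ := h3
  omega

lemma qbinom (hq1 : ‖q‖ < 1) (m : ℕ) (x : ℂ) :
    ∏ j ∈ Finset.range m, (1 + x * q ^ j) =
      ∑ k ∈ Finset.range (m + 1), gb q m k * q ^ (k * (k - 1) / 2) * x ^ k := by
  induction m with
  | zero => simp [gb_zero hq1]
  | succ m ih =>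
      calc ∏ j ∈ Finset.range (m + 1), (1 + x * q ^ j)
          = (∑ k ∈ Finset.range (m + 1), gb q m k * q ^ (k * (k - 1) / 2) * x ^ k) * (1 + x * q ^ m) := by
            rw [Finset.prod_range_succ, ih]
        _ = (∑ k ∈ Finset.range (m + 1), gb q m k * q ^ (k * (k - 1) / 2) * x ^ k)
            + ∑ k ∈ Finset.range (m + 1), gb q m k * q ^ (k * (k - 1) / 2 + m) * x ^ (k + 1) := by
            rw [mul_add, mul_one, Finset.sum_mul]
            congr 1
            refine Finset.sum_congr rfl fun k _ => ?_
            rw [pow_add, pow_succ]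
            ring
        _ = ∑ k ∈ Finset.range (m + 2), gb q (m + 1) k * q ^ (k * (k - 1) / 2) * x ^ k := by
            rw [Finset.sum_range_succ' (fun k => gb q (m + 1) k * q ^ (k * (k - 1) / 2) * x ^ k) (m + 1)]
            have hps : ∀ k ∈ Finset.range (m + 1),
                gb q (m + 1) (k + 1) * q ^ ((k + 1) * (k + 1 - 1) / 2) * x ^ (k + 1)
                = gb q m (k + 1) * q ^ ((k + 1) * k / 2) * x ^ (k + 1)
                  + gb q m k * q ^ (k * (k - 1) / 2 + m) * x ^ (k + 1) := by
              intro k hk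
              rw [Finset.mem_range] at hk
              have htri := tri k
              have he : k * (k - 1) / 2 + m = m - k + ((k + 1) * k / 2) := by omega
              simp only [Nat.add_sub_cancel]
              rw [pascal' hq1 k m (by omega), he, pow_add]
              ring
            rw [Finset.sum_congr rfl hps, Finset.sum_add_distrib]
            have h1 : ∑ k ∈ Finset.range (m + 1), gb q m (k + 1) * q ^ ((k + 1) * k / 2) * x ^ (k + 1)
                = ∑ k ∈ Finset.range m, gb q m (k + 1) * q ^ ((k + 1) * k / 2) * x ^ (k + 1) := by
              rw [Finset.sum_range_succ, gb_of_gt m (m + 1) (by omega)]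
              simp
            rw [h1, gb_zero hq1]
            rw [Finset.sum_range_succ' (fun k => gb q m k * q ^ (k * (k - 1) / 2) * x ^ k) m]
            have hnn : ∀ k : ℕ, (k + 1) * (k + 1 - 1) / 2 = (k + 1) * k / 2 := by
              intro k; simp [Nat.add_sub_cancel]
            simp only [hnn, gb_zero hq1, pow_zero, mul_one, one_mul, Nat.zero_mul, Nat.sub_self]
            ring


variable {ζ : ℂ}

lemma sum_range_succ_id (N : ℕ) : ∑ j ∈ Finset.range N, (j + 1) = N * (N + 1) / 2 := by
  have h := Finset.sum_range_id_mul_two N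
  have h2 : ∑ j ∈ Finset.range N, (j + 1) = (∑ j ∈ Finset.range N, j) + N := by
    rw [Finset.sum_add_distrib, Finset.sum_const, Finset.card_range, smul_eq_mul, mul_one]
  have h3 : N * (N + 1) = N * (N - 1) + 2 * N := by
    cases N with
    | zero => rfl
    | succ n => simp [Nat.add_sub_cancel]; ring
  omega

lemma pow_N_ne (hq0 : q ≠ 0) (N : ℕ) : q ^ N ≠ 0 := pow_ne_zero _ hq0

lemma left_split (hq0 : q ≠ 0) (hζ : ζ ≠ 0) (N : ℕ) :
    q ^ (N * (N + 1)) * ∏ j ∈ Finset.range (2 * N), (1 + (ζ / q ^ N) * q ^ j)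
    = ζ ^ N * q ^ (N * (N + 1) / 2) *
      ((∏ j ∈ Finset.range N, (1 + ζ * q ^ j)) * (∏ j ∈ Finset.range N, (1 + (q / ζ) * q ^ j))) := by
  have hsplit : ∏ j ∈ Finset.range (2 * N), (1 + (ζ / q ^ N) * q ^ j)
      = (∏ j ∈ Finset.range N, (1 + (ζ / q ^ N) * q ^ j)) *
        ∏ j ∈ Finset.range N, (1 + (ζ / q ^ N) * q ^ (N + j)) := by
    rw [two_mul]
    exact Finset.prod_range_add _ N N
  have hB : ∏ j ∈ Finset.range N, (1 + (ζ / q ^ N) * q ^ (N + j))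
      = ∏ j ∈ Finset.range N, (1 + ζ * q ^ j) := by
    refine Finset.prod_congr rfl fun j _ => ?_
    congr 1
    rw [pow_add]
    field_simp
  have hA : q ^ (N * (N + 1)) * ∏ j ∈ Finset.range N, (1 + (ζ / q ^ N) * q ^ j)
      = ζ ^ N * q ^ (N * (N + 1) / 2) * ∏ j ∈ Finset.range N, (1 + (q / ζ) * q ^ j) := by
    have hfac : ∀ j ∈ Finset.range N, q ^ (N + 1) * (1 + (ζ / q ^ N) * q ^ j)
        = ζ * q ^ (j + 1) * (1 + (q / ζ) * q ^ (N - 1 - j)) := by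
      intro j hj
      rw [Finset.mem_range] at hj
      obtain ⟨r, rfl⟩ : ∃ r, N = j + r + 1 := ⟨N - j - 1, by omega⟩
      have e1 : j + r + 1 - 1 - j = r := by omega
      rw [e1]
      field_simp
      ring
    calc q ^ (N * (N + 1)) * ∏ j ∈ Finset.range N, (1 + (ζ / q ^ N) * q ^ j)
        = ∏ j ∈ Finset.range N, (q ^ (N + 1) * (1 + (ζ / q ^ N) * q ^ j)) := by
          rw [Finset.prod_mul_distrib, Finset.prod_const, Finset.card_range, ← pow_mul]
          ring_nf
      _ = ∏ j ∈ Finset.range N, (ζ * q ^ (j + 1) * (1 + (q / ζ) * q ^ (N - 1 - j))) := by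
          exact Finset.prod_congr rfl hfac
      _ = ζ ^ N * q ^ (N * (N + 1) / 2) * ∏ j ∈ Finset.range N, (1 + (q / ζ) * q ^ j) := by
          rw [Finset.prod_mul_distrib, Finset.prod_mul_distrib, Finset.prod_const,
            Finset.card_range, Finset.prod_pow_eq_pow_sum, sum_range_succ_id,
            Finset.prod_range_reflect (fun j => (1 + (q / ζ) * q ^ j)) N]
  calc q ^ (N * (N + 1)) * ∏ j ∈ Finset.range (2 * N), (1 + (ζ / q ^ N) * q ^ j)
      = (q ^ (N * (N + 1)) * ∏ j ∈ Finset.range N, (1 + (ζ / q ^ N) * q ^ j)) *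
        ∏ j ∈ Finset.range N, (1 + (ζ / q ^ N) * q ^ (N + j)) := by rw [hsplit]; ring
    _ = _ := by rw [hA, hB]; ring


lemma even_nat_mul_pred (k : ℕ) : ∃ c, k * (k - 1) = 2 * c := by
  cases k with
  | zero => exact ⟨0, rfl⟩
  | succ n =>
      obtain ⟨c, hc⟩ := Nat.even_mul_succ_self n
      refine ⟨c, ?_⟩
      rw [Nat.add_sub_cancel, mul_comm]
      omega

lemma int_cast_mul_pred (k c : ℕ) (h : k * (k - 1) = 2 * c) :
    (k : ℤ) * ((k : ℤ) - 1) = 2 * (c : ℤ) := by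
  cases k with
  | zero => simp at h ⊢; omega
  | succ n =>
      simp [Nat.add_sub_cancel] at h
      push_cast
      nlinarith [h]

lemma term_eq (hq0 : q ≠ 0) (hζ : ζ ≠ 0) (N k : ℕ) :
    q ^ (N * (N + 1)) * (q ^ (k * (k - 1) / 2) * (ζ / q ^ N) ^ k)
    = ζ ^ N * q ^ (N * (N + 1) / 2) *
      (q ^ ((((k : ℤ) - N) * ((k : ℤ) - N - 1)) / 2) * ζ ^ ((k : ℤ) - N)) := by
  obtain ⟨c, hc⟩ := even_nat_mul_pred k
  obtain ⟨d, hd⟩ : ∃ d, N * (N + 1) = 2 * d := by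
    obtain ⟨d, hd⟩ := Nat.even_mul_succ_self N; exact ⟨d, by omega⟩
  have hint : (k : ℤ) * ((k : ℤ) - 1) = 2 * (c : ℤ) := int_cast_mul_pred k c hc
  have hexp : ((k : ℤ) - N) * ((k : ℤ) - N - 1)
      = (k : ℤ) * ((k : ℤ) - 1) - 2 * ((N : ℤ) * k) + (N : ℤ) * ((N : ℤ) + 1) := by ring
  have hdint : (N : ℤ) * ((N : ℤ) + 1) = 2 * (d : ℤ) := by exact_mod_cast hd
  have hm : ((k : ℤ) - N) * ((k : ℤ) - N - 1) = 2 * ((c : ℤ) - (N : ℤ) * k + d) := by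
    rw [hexp, hint, hdint]; ring
  have hnn : 0 ≤ ((k : ℤ) - N) * ((k : ℤ) - N - 1) := by
    rcases le_or_gt ((k : ℤ) - N) 0 with h | h
    · have h2 : ((k : ℤ) - N - 1) ≤ 0 := by linarith
      have h3 := mul_nonneg (neg_nonneg.2 h) (neg_nonneg.2 h2)
      rwa [neg_mul_neg] at h3
    · exact mul_nonneg (by linarith) (by omega)
  have hm0 : 0 ≤ (c : ℤ) - (N : ℤ) * k + d := by linarith
  obtain ⟨mn, hmn⟩ : ∃ mn : ℕ, (c : ℤ) - (N : ℤ) * k + d = (mn : ℤ) :=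
    ⟨((c : ℤ) - (N : ℤ) * k + d).toNat, (Int.toNat_of_nonneg hm0).symm⟩
  have hdiv : (((k : ℤ) - N) * ((k : ℤ) - N - 1)) / 2 = (mn : ℤ) := by
    rw [hm, hmn]; omega
  have hcdiv : k * (k - 1) / 2 = c := by omega
  have hddiv : N * (N + 1) / 2 = d := by omega
  rw [hdiv, hcdiv, hddiv, hd, zpow_natCast, zpow_sub₀ hζ, zpow_natCast, zpow_natCast,
    div_pow, ← pow_mul]
  have hkey : 2 * d + c = d + mn + N * k := by
    have : (2 * d + c : ℤ) = (d : ℤ) + mn + N * k := by push_cast; linarith [hmn]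
    exact_mod_cast this
  have hpow : q ^ (2 * d) * q ^ c = q ^ d * q ^ mn * q ^ (N * k) := by
    rw [← pow_add, ← pow_add, ← pow_add, hkey]
  field_simp
  linear_combination hpow

lemma Kint (hq0 : q ≠ 0) (hq1 : ‖q‖ < 1) (hζ : ζ ≠ 0) (N : ℕ) :
    (∏ j ∈ Finset.range N, (1 + ζ * q ^ j)) * (∏ j ∈ Finset.range N, (1 + (q / ζ) * q ^ j))
    = ∑ n ∈ Finset.Icc (-(N : ℤ)) (N : ℤ),
        gb q (2 * N) (n + N).toNat * (q ^ (n * (n - 1) / 2) * ζ ^ n) := by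
  have hmain := congrArg (fun z => q ^ (N * (N + 1)) * z) (qbinom hq1 (2 * N) (ζ / q ^ N))
  simp only [Finset.mul_sum] at hmain
  rw [left_split hq0 hζ N] at hmain
  have hterm : ∀ k ∈ Finset.range (2 * N + 1),
      q ^ (N * (N + 1)) * (gb q (2 * N) k * q ^ (k * (k - 1) / 2) * (ζ / q ^ N) ^ k)
      = ζ ^ N * q ^ (N * (N + 1) / 2) *
        (gb q (2 * N) k * (q ^ ((((k : ℤ) - N) * ((k : ℤ) - N - 1)) / 2) * ζ ^ ((k : ℤ) - N))) := by
    intro k _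
    have h := term_eq hq0 hζ N k
    calc q ^ (N * (N + 1)) * (gb q (2 * N) k * q ^ (k * (k - 1) / 2) * (ζ / q ^ N) ^ k)
        = gb q (2 * N) k * (q ^ (N * (N + 1)) * (q ^ (k * (k - 1) / 2) * (ζ / q ^ N) ^ k)) := by ring
      _ = gb q (2 * N) k * (ζ ^ N * q ^ (N * (N + 1) / 2) *
            (q ^ ((((k : ℤ) - N) * ((k : ℤ) - N - 1)) / 2) * ζ ^ ((k : ℤ) - N))) := by rw [h]
      _ = _ := by ring
  rw [Finset.sum_congr rfl hterm] at hmain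
  have hbij : ∑ k ∈ Finset.range (2 * N + 1),
      ζ ^ N * q ^ (N * (N + 1) / 2) *
        (gb q (2 * N) k * (q ^ ((((k : ℤ) - N) * ((k : ℤ) - N - 1)) / 2) * ζ ^ ((k : ℤ) - N)))
      = ∑ n ∈ Finset.Icc (-(N : ℤ)) (N : ℤ),
          ζ ^ N * q ^ (N * (N + 1) / 2) *
            (gb q (2 * N) (n + N).toNat * (q ^ (n * (n - 1) / 2) * ζ ^ n)) := by
    refine Finset.sum_nbij' (fun k => (k : ℤ) - N) (fun n => (n + N).toNat) ?_ ?_ ?_ ?_ ?_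
    · intro k hk
      rw [Finset.mem_range] at hk
      rw [Finset.mem_Icc]
      omega
    · intro n hn
      rw [Finset.mem_Icc] at hn
      rw [Finset.mem_range]
      omega
    · intro k hk
      rw [Finset.mem_range] at hk
      omega
    · intro n hn
      rw [Finset.mem_Icc] at hn
      omega
    · intro k hk
      rw [Finset.mem_range] at hk
      have ht : (((k : ℤ) - N) + N).toNat = k := by omega
      rw [ht]
  rw [hbij] at hmain
  rw [← Finset.mul_sum] at hmain
  exact mul_left_cancel₀ (mul_ne_zero (pow_ne_zero _ hζ) (pow_ne_zero _ hq0)) hmain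


/-! ### Analytic part -/

lemma hasProd_zero_of_exists_zero {f : ℕ → ℂ} (h : ∃ j₀, f j₀ = 0) : HasProd f 0 := by
  obtain ⟨j₀, hj₀⟩ := h
  have hev : (fun s : Finset ℕ => ∏ i ∈ s, f i) =ᶠ[Filter.atTop] fun _ => 0 := by
    filter_upwards [Filter.eventually_ge_atTop ({j₀} : Finset ℕ)] with s hs
    exact Finset.prod_eq_zero (hs (Finset.mem_singleton_self j₀)) hj₀
  exact (tendsto_congr' hev).mpr tendsto_const_nhds

lemma hasProd_exp {f : ℕ → ℂ} (hne : ∀ j, f j ≠ 0)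
    (hs : Summable fun j => Complex.log (f j)) :
    HasProd f (Complex.exp (∑' j, Complex.log (f j))) := by
  have h := hs.hasSum.cexp
  rwa [show (Complex.exp ∘ fun j => Complex.log (f j)) = f from
    funext fun j => Complex.exp_log (hne j)] at h

lemma summable_log_aux (hq1 : ‖q‖ < 1) (t : ℂ) :
    Summable (fun j : ℕ => Complex.log (1 + t * q ^ j)) := by
  have hg : Summable (fun j : ℕ => 3 / 2 * (‖t‖ * ‖q‖ ^ j)) :=
    ((summable_geometric_of_lt_one (norm_nonneg q) hq1).mul_left ‖t‖).mul_left (3 / 2)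
  refine Summable.of_norm_bounded_eventually hg ?_
  · rw [Nat.cofinite_eq_atTop]
    have htend : Filter.Tendsto (fun j : ℕ => ‖t‖ * ‖q‖ ^ j) Filter.atTop (nhds 0) := by
      simpa using (tendsto_pow_atTop_nhds_zero_of_lt_one (norm_nonneg q) hq1).const_mul ‖t‖
    filter_upwards [htend.eventually (ge_mem_nhds (by norm_num : (0:ℝ) < 1/2))] with j hj
    have hnorm : ‖t * q ^ j‖ = ‖t‖ * ‖q‖ ^ j := by rw [norm_mul, norm_pow]
    have h12 : ‖t * q ^ j‖ ≤ 1 / 2 := by rw [hnorm]; exact hj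
    calc ‖Complex.log (1 + t * q ^ j)‖ ≤ 3 / 2 * ‖t * q ^ j‖ :=
          Complex.norm_log_one_add_half_le_self h12
      _ = 3 / 2 * (‖t‖ * ‖q‖ ^ j) := by rw [hnorm]

lemma multipliable_aux (hq1 : ‖q‖ < 1) (t : ℂ) :
    Multipliable (fun j : ℕ => 1 + t * q ^ j) := by
  by_cases hz : ∀ j, (1 : ℂ) + t * q ^ j ≠ 0
  · exact ⟨_, hasProd_exp hz (summable_log_aux hq1 t)⟩
  · push_neg at hz
    exact ⟨0, hasProd_zero_of_exists_zero hz⟩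

lemma summable_log_Q (hq1 : ‖q‖ < 1) :
    Summable fun j : ℕ => Complex.log (1 - q ^ (j + 1)) :=
  (summable_log_aux hq1 (-q)).congr fun j => by
    rw [show (1 : ℂ) + -q * q ^ j = 1 - q ^ (j + 1) from by rw [pow_succ']; ring]

lemma Q_hasProd (hq1 : ‖q‖ < 1) :
    HasProd (fun j : ℕ => 1 - q ^ (j + 1)) (∏' j : ℕ, (1 - q ^ (j + 1))) :=
  Multipliable.hasProd ⟨_, hasProd_exp (one_sub_ne hq1) (summable_log_Q hq1)⟩

lemma Qinf_ne (hq1 : ‖q‖ < 1) : (∏' j : ℕ, (1 - q ^ (j + 1))) ≠ 0 := by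
  rw [(hasProd_exp (one_sub_ne hq1) (summable_log_Q hq1)).tprod_eq]
  exact Complex.exp_ne_zero _

lemma tendsto_Q (hq1 : ‖q‖ < 1) :
    Filter.Tendsto (fun N => Q q N) Filter.atTop (nhds (∏' j : ℕ, (1 - q ^ (j + 1)))) :=
  (Q_hasProd hq1).tendsto_prod_nat

noncomputable def Abd (q : ℂ) : ℝ := Real.exp (∑' j : ℕ, ‖q‖ ^ (j + 1))
noncomputable def Bbd (q : ℂ) : ℝ := Real.exp (∑' j : ℕ, Real.log (1 - ‖q‖ ^ (j + 1)))

lemma summable_geom_succ (hq1 : ‖q‖ < 1) : Summable (fun j : ℕ => ‖q‖ ^ (j + 1)) := by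
  have := (summable_geometric_of_lt_one (norm_nonneg q) hq1).mul_left ‖q‖
  refine this.congr fun j => ?_
  rw [pow_succ']

lemma Q_upper (hq1 : ‖q‖ < 1) (m : ℕ) : ‖Q q m‖ ≤ Abd q := by
  rw [Q, norm_prod]
  calc ∏ j ∈ Finset.range m, ‖1 - q ^ (j + 1)‖
      ≤ ∏ j ∈ Finset.range m, Real.exp (‖q‖ ^ (j + 1)) := by
        refine Finset.prod_le_prod (fun j _ => norm_nonneg _) fun j _ => ?_
        calc ‖1 - q ^ (j + 1)‖ ≤ ‖(1 : ℂ)‖ + ‖q ^ (j + 1)‖ := norm_sub_le _ _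
          _ = 1 + ‖q‖ ^ (j + 1) := by rw [norm_one, norm_pow]
          _ ≤ Real.exp (‖q‖ ^ (j + 1)) := by
              have := Real.add_one_le_exp (‖q‖ ^ (j + 1)); linarith
    _ = Real.exp (∑ j ∈ Finset.range m, ‖q‖ ^ (j + 1)) := by rw [Real.exp_sum]
    _ ≤ Abd q := by
        rw [Abd]
        apply Real.exp_le_exp.mpr
        exact Summable.sum_le_tsum _ (fun j _ => pow_nonneg (norm_nonneg q) _)
          (summable_geom_succ hq1)

lemma norm_pow_succ_lt_one (hq1 : ‖q‖ < 1) (j : ℕ) : ‖q‖ ^ (j + 1) < 1 :=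
  pow_lt_one₀ (norm_nonneg q) hq1 (by omega)

lemma abs_log_one_sub_le (x : ℝ) (h0 : 0 ≤ x) (h2 : x ≤ 1 / 2) :
    |Real.log (1 - x)| ≤ 2 * x := by
  have h1 : (0 : ℝ) < 1 - x := by linarith
  have hle : Real.log (1 - x) ≤ 0 := Real.log_nonpos (by linarith) (by linarith)
  have hlow : -(2 * x) ≤ Real.log (1 - x) := by
    have hinv : Real.log (1 - x)⁻¹ ≤ (1 - x)⁻¹ - 1 := Real.log_le_sub_one_of_pos (by positivity)
    rw [Real.log_inv] at hinv
    have hfrac : (1 - x)⁻¹ - 1 = x / (1 - x) := by field_simp; ring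
    have hbound : x / (1 - x) ≤ 2 * x := by
      rw [div_le_iff₀ h1]
      nlinarith
    linarith
  rw [abs_le]
  constructor <;> linarith

lemma summable_log_one_sub (hq1 : ‖q‖ < 1) :
    Summable (fun j : ℕ => Real.log (1 - ‖q‖ ^ (j + 1))) := by
  have hg : Summable (fun j : ℕ => 2 * ‖q‖ ^ (j + 1)) := (summable_geom_succ hq1).mul_left 2
  refine Summable.of_norm_bounded_eventually hg ?_
  · rw [Nat.cofinite_eq_atTop]
    have htend : Filter.Tendsto (fun j : ℕ => ‖q‖ ^ (j + 1)) Filter.atTop (nhds 0) := by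
      have := tendsto_pow_atTop_nhds_zero_of_lt_one (norm_nonneg q) hq1
      exact this.comp (Filter.tendsto_add_atTop_nat 1)
    filter_upwards [htend.eventually (ge_mem_nhds (by norm_num : (0:ℝ) < 1/2))] with j hj
    exact abs_log_one_sub_le _ (pow_nonneg (norm_nonneg q) _) hj

lemma Q_lower (hq1 : ‖q‖ < 1) (m : ℕ) : Bbd q ≤ ‖Q q m‖ := by
  rw [Q, norm_prod]
  have hstep : ∀ j ∈ Finset.range m, Real.exp (Real.log (1 - ‖q‖ ^ (j + 1))) ≤ ‖1 - q ^ (j + 1)‖ := by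
    intro j _
    have h1 : (0 : ℝ) < 1 - ‖q‖ ^ (j + 1) := by
      have := norm_pow_succ_lt_one hq1 j; linarith
    rw [Real.exp_log h1]
    calc 1 - ‖q‖ ^ (j + 1) = ‖(1 : ℂ)‖ - ‖q ^ (j + 1)‖ := by rw [norm_one, norm_pow]
      _ ≤ ‖1 - q ^ (j + 1)‖ := norm_sub_norm_le _ _
  calc Bbd q ≤ Real.exp (∑ j ∈ Finset.range m, Real.log (1 - ‖q‖ ^ (j + 1))) := by
        rw [Bbd]
        apply Real.exp_le_exp.mpr
        have := Summable.sum_le_tsum (Finset.range m)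
          (f := fun j => -Real.log (1 - ‖q‖ ^ (j + 1)))
          (fun j _ => by
            have hx : (0 : ℝ) ≤ ‖q‖ ^ (j + 1) := by positivity
            have h1 : (0 : ℝ) < 1 - ‖q‖ ^ (j + 1) := by
              have := norm_pow_succ_lt_one hq1 j; linarith
            have h2 : Real.log (1 - ‖q‖ ^ (j + 1)) ≤ 0 := Real.log_nonpos (by linarith) (by linarith)
            show (0 : ℝ) ≤ -Real.log (1 - ‖q‖ ^ (j + 1))
            linarith)
          (summable_log_one_sub hq1).neg
        rw [tsum_neg] at this
        have hsn : ∑ j ∈ Finset.range m, -Real.log (1 - ‖q‖ ^ (j + 1))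
            = -∑ j ∈ Finset.range m, Real.log (1 - ‖q‖ ^ (j + 1)) := by simp
        rw [hsn] at this
        linarith
    _ = ∏ j ∈ Finset.range m, Real.exp (Real.log (1 - ‖q‖ ^ (j + 1))) := by rw [Real.exp_sum]
    _ ≤ ∏ j ∈ Finset.range m, ‖1 - q ^ (j + 1)‖ := by
        refine Finset.prod_le_prod (fun j _ => (Real.exp_pos _).le) hstep

lemma Bbd_pos : 0 < Bbd q := Real.exp_pos _

lemma gb_bound (hq1 : ‖q‖ < 1) (m k : ℕ) : ‖gb q m k‖ ≤ Abd q / (Bbd q * Bbd q) := by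
  have hApos : 0 < Abd q := Real.exp_pos _
  have hBpos : 0 < Bbd q := Real.exp_pos _
  rw [gb]
  split_ifs with h
  · rw [norm_div, norm_mul]
    apply div_le_div₀ (le_of_lt hApos) (Q_upper hq1 m) (by positivity)
    exact mul_le_mul (Q_lower hq1 k) (Q_lower hq1 (m - k)) hBpos.le
      ((Bbd_pos).le.trans (Q_lower hq1 k))
  · rw [norm_zero]
    positivity


lemma aux_summable {a : ℝ} (r : ℝ) (ha0 : 0 < a) (ha : a < 1) (hr : 0 < r) :
    Summable (fun n : ℕ => a ^ (n * (n - 1) / 2) * r ^ n) := by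
  refine summable_of_ratio_test_tendsto_lt_one one_pos ?_ ?_
  · exact Filter.Eventually.of_forall fun n =>
      ne_of_gt (mul_pos (pow_pos ha0 _) (pow_pos hr _))
  · have hfun : (fun n : ℕ => ‖a ^ ((n + 1) * (n + 1 - 1) / 2) * r ^ (n + 1)‖ /
        ‖a ^ (n * (n - 1) / 2) * r ^ n‖) = fun n => a ^ n * r := by
      funext n
      have he : (n + 1) * (n + 1 - 1) / 2 = n * (n - 1) / 2 + n := by
        rw [Nat.add_sub_cancel]; exact tri n
      rw [he, pow_add]
      rw [Real.norm_eq_abs, Real.norm_eq_abs, abs_of_pos (by positivity), abs_of_pos (by positivity)]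
      rw [pow_succ]
      field_simp
    rw [hfun]
    have := (tendsto_pow_atTop_nhds_zero_of_lt_one ha0.le ha).mul_const r
    simpa using this

lemma summable_norm_f (hq0 : q ≠ 0) (hq1 : ‖q‖ < 1) (hζ : ζ ≠ 0) :
    Summable (fun n : ℤ => ‖q ^ (n * (n - 1) / 2) * ζ ^ n‖) := by
  have ha0 : 0 < ‖q‖ := norm_pos_iff.mpr hq0
  apply Summable.of_nat_of_neg
  · refine (aux_summable ‖ζ‖ ha0 hq1 (norm_pos_iff.mpr hζ)).congr fun n => ?_
    obtain ⟨c, hc⟩ := even_nat_mul_pred n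
    have hint := int_cast_mul_pred n c hc
    have he : ((n : ℤ) * ((n : ℤ) - 1) / 2) = ((n * (n - 1) / 2 : ℕ) : ℤ) := by
      rw [hint]
      omega
    rw [he, zpow_natCast, zpow_natCast, norm_mul, norm_pow, norm_pow]
  · refine ((aux_summable (‖q‖ * ‖ζ‖⁻¹) ha0 hq1 (mul_pos ha0 (inv_pos.mpr (norm_pos_iff.mpr hζ)))).congr fun n => ?_)
    obtain ⟨c, hc⟩ := even_nat_mul_pred (n + 1)
    have hint := int_cast_mul_pred (n + 1) c hc
    have he : ((-n : ℤ) * ((-n : ℤ) - 1) / 2) = ((n * (n - 1) / 2 + n : ℕ) : ℤ) := by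
      have hexp : ((-n : ℤ)) * ((-n : ℤ) - 1)
          = ((n + 1 : ℕ) : ℤ) * (((n + 1 : ℕ) : ℤ) - 1) := by push_cast; ring
      rw [hexp, hint]
      have hcd : n * (n - 1) / 2 + n = c := by
        have htri := tri n
        have h2 : (n + 1) * n = 2 * c := by
          have h3 : (n + 1) * ((n + 1) - 1) = (n + 1) * n := by rw [Nat.add_sub_cancel]
          omega
        omega
      rw [hcd]
      omega
    rw [he, zpow_natCast, norm_mul, norm_pow, norm_zpow]
    rw [zpow_neg, zpow_natCast]
    rw [pow_add, mul_pow, inv_pow]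
    ring

theorem jacobi_triple_product_aux (hq0 : q ≠ 0) (hq1 : ‖q‖ < 1) (hζ : ζ ≠ 0) :
    (∏' j : ℕ, (1 + ζ * q ^ j)) * (∏' j : ℕ, (1 + (q / ζ) * q ^ j)) *
        (∏' j : ℕ, (1 - q ^ (j + 1))) =
      ∑' n : ℤ, q ^ (n * (n - 1) / 2) * ζ ^ n := by
  set f : ℤ → ℂ := fun n => q ^ (n * (n - 1) / 2) * ζ ^ n with hf
  set Qinf : ℂ := ∏' j : ℕ, (1 - q ^ (j + 1)) with hQinf
  have hQne : Qinf ≠ 0 := Qinf_ne hq1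
  set F : ℕ → ℤ → ℂ := fun N n =>
    if n ∈ Finset.Icc (-(N : ℤ)) (N : ℤ) then gb q (2 * N) (n + N).toNat * f n else 0 with hF
  have hApos : 0 < Abd q := Real.exp_pos _
  have hBpos : 0 < Bbd q := Real.exp_pos _
  have h_bound : ∀ N : ℕ, ∀ n : ℤ, ‖F N n‖ ≤ Abd q / (Bbd q * Bbd q) * ‖f n‖ := by
    intro N n
    rw [hF]
    dsimp only
    split_ifs with h
    · rw [norm_mul]
      exact mul_le_mul_of_nonneg_right (gb_bound hq1 _ _) (norm_nonneg _)
    · rw [norm_zero]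
      positivity
  have h_sum : Summable (fun n : ℤ => Abd q / (Bbd q * Bbd q) * ‖f n‖) :=
    (summable_norm_f hq0 hq1 hζ).mul_left _
  have hab : ∀ n : ℤ, Filter.Tendsto (fun N => F N n) Filter.atTop
      (nhds (Qinf / (Qinf * Qinf) * f n)) := by
    intro n
    have hQt := tendsto_Q hq1
    have h2N : Filter.Tendsto (fun N : ℕ => Q q (2 * N)) Filter.atTop (nhds Qinf) :=
      hQt.comp (Filter.tendsto_atTop.mpr fun b =>
        Filter.eventually_atTop.mpr ⟨b, fun N hN => by omega⟩)
    have hplus : Filter.Tendsto (fun N : ℕ => Q q ((n + N).toNat)) Filter.atTop (nhds Qinf) :=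
      hQt.comp (Filter.tendsto_atTop.mpr fun b =>
        Filter.eventually_atTop.mpr ⟨b + n.natAbs, fun N hN => by omega⟩)
    have hminus : Filter.Tendsto (fun N : ℕ => Q q ((N - n).toNat)) Filter.atTop (nhds Qinf) :=
      hQt.comp (Filter.tendsto_atTop.mpr fun b =>
        Filter.eventually_atTop.mpr ⟨b + n.natAbs, fun N hN => by omega⟩)
    have hquot : Filter.Tendsto
        (fun N : ℕ => Q q (2 * N) / (Q q ((n + N).toNat) * Q q ((N - n).toNat)) * f n)
        Filter.atTop (nhds (Qinf / (Qinf * Qinf) * f n)) :=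
      (h2N.div (hplus.mul hminus) (mul_ne_zero hQne hQne)).mul_const (f n)
    refine hquot.congr' ?_
    filter_upwards [Filter.eventually_ge_atTop n.natAbs] with N hN
    have hmem : n ∈ Finset.Icc (-(N : ℤ)) (N : ℤ) := by
      rw [Finset.mem_Icc]; omega
    have hle : (n + N).toNat ≤ 2 * N := by omega
    have hsub : 2 * N - (n + N).toNat = (N - n).toNat := by omega
    rw [hF]
    dsimp only
    rw [if_pos hmem, gb, if_pos hle, hsub]
  have htsum := tendsto_tsum_of_dominated_convergence h_sum hab
    (Filter.Eventually.of_forall h_bound)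
  have hFsum : ∀ N : ℕ, ∑' n : ℤ, F N n =
      (∏ j ∈ Finset.range N, (1 + ζ * q ^ j)) * ∏ j ∈ Finset.range N, (1 + (q / ζ) * q ^ j) := by
    intro N
    rw [tsum_eq_sum (s := Finset.Icc (-(N : ℤ)) (N : ℤ)) (fun n hn => by rw [hF]; exact if_neg hn)]
    rw [Kint hq0 hq1 hζ N]
    refine Finset.sum_congr rfl fun n hn => ?_
    rw [hF]
    exact if_pos hn
  have htsum' : Filter.Tendsto
      (fun N : ℕ => (∏ j ∈ Finset.range N, (1 + ζ * q ^ j)) *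
        ∏ j ∈ Finset.range N, (1 + (q / ζ) * q ^ j))
      Filter.atTop (nhds (∑' n : ℤ, Qinf / (Qinf * Qinf) * f n)) := by
    refine htsum.congr fun N => hFsum N
  have hL : Filter.Tendsto
      (fun N : ℕ => (∏ j ∈ Finset.range N, (1 + ζ * q ^ j)) *
        ∏ j ∈ Finset.range N, (1 + (q / ζ) * q ^ j))
      Filter.atTop (nhds ((∏' j : ℕ, (1 + ζ * q ^ j)) * ∏' j : ℕ, (1 + (q / ζ) * q ^ j))) :=
    ((multipliable_aux hq1 ζ).hasProd.tendsto_prod_nat).mul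
      ((multipliable_aux hq1 (q / ζ)).hasProd.tendsto_prod_nat)
  have huniq : (∏' j : ℕ, (1 + ζ * q ^ j)) * (∏' j : ℕ, (1 + (q / ζ) * q ^ j))
      = ∑' n : ℤ, Qinf / (Qinf * Qinf) * f n := tendsto_nhds_unique hL htsum'
  have hsimp : Qinf / (Qinf * Qinf) = Qinf⁻¹ := by field_simp
  rw [hsimp] at huniq
  rw [tsum_mul_left] at huniq
  rw [huniq]
  field_simp

end JTP


/-- The Jacobi triple product identity: for `0 < |q| < 1` and `ζ ≠ 0`,
`(−ζ; q)_∞ (−q/ζ; q)_∞ (q; q)_∞ = Σ_{n∈ℤ} q^{n(n−1)/2} ζ^n`,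
where `(t; q)_∞ = ∏_{j≥0}(1 − t q^j)`. -/
theorem jacobi_triple_product (q ζ : ℂ) (hq0 : 0 < ‖q‖)
    (hq1 : ‖q‖ < 1) (hζ : ζ ≠ 0) :
    (∏' j : ℕ, (1 - (-ζ) * q ^ j)) * (∏' j : ℕ, (1 - (-q / ζ) * q ^ j)) *
        (∏' j : ℕ, (1 - q * q ^ j)) =
      ∑' n : ℤ, q ^ (n * (n - 1) / 2) * ζ ^ n := by
  have hqne : q ≠ 0 := by
    intro h; rw [h] at hq0; simp at hq0
  have hq1' : ‖q‖ < 1 := by exact hq1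
  have e1 : (∏' j : ℕ, (1 - (-ζ) * q ^ j)) = ∏' j : ℕ, (1 + ζ * q ^ j) :=
    tprod_congr fun j => by ring
  have e2 : (∏' j : ℕ, (1 - (-q / ζ) * q ^ j)) = ∏' j : ℕ, (1 + (q / ζ) * q ^ j) :=
    tprod_congr fun j => by ring
  have e3 : (∏' j : ℕ, (1 - q * q ^ j)) = ∏' j : ℕ, (1 - q ^ (j + 1)) :=
    tprod_congr fun j => by rw [pow_succ']
  rw [e1, e2, e3]
  exact JTP.jacobi_triple_product_aux hqne hq1' hζ
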